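/- Let m ≥ 1 and let α : (Fin m → Fin 2) → ℂ be a family of coefficients all lying on the unit circle (Complex.abs (α f) = 1 for all f). Define the comp map on indices by (comp f) j = 1 −entries, i.e. comp f j ≠ f j for all j, and define the multi-qubit quantum gate entangler R : Matrix ((Fin m → Fin 2)) ((Fin m → Fin 2)) ℂ as the sum of a diagonal part and an anti-diagonal part: R f g = α f if f = g and f is a constant function; R f g = α g if f is not constant and g = comp f; and R f g = 0 otherwise. Then R is unitary: R * Rᴴ = 1 and Rᴴ * R = 1. -/

import Mathlib

open Matrix

/-- The multi-qubit quantum gate entangler `R = R^d + R^{ad}`, with diagonal entries `α f`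
at the constant bit strings `f = g` and anti-diagonal entries `α g` at `g = comp f` for
non-constant `f`, is unitary whenever all coefficients `α f` lie on the unit circle. -/
theorem multi_qubit_gate_entangler_unitary (m : ℕ) (hm : 1 ≤ m)
    (α : (Fin m → Fin 2) → ℂ) (hα : ∀ f, ‖α f‖ = 1)
    (comp : (Fin m → Fin 2) → (Fin m → Fin 2))
    (hcomp : ∀ f j, comp f j ≠ f j)
    (R : Matrix (Fin m → Fin 2) (Fin m → Fin 2) ℂ)
    (hR : ∀ f g, R f g =
      if f = g ∧ ∃ c, ∀ j, f j = c then α f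
      else if (¬ ∃ c, ∀ j, f j = c) ∧ g = comp f then α g
      else 0) :
    R * Rᴴ = 1 ∧ Rᴴ * R = 1 := by
  classical
  have hflip : ∀ a b c : Fin 2, a ≠ b → c ≠ b → a = c := by decide
  have hcc : ∀ f, comp (comp f) = f := by
    intro f; funext j
    exact hflip _ _ _ (hcomp (comp f) j) (hcomp f j).symm
  have hnc : ∀ f, (¬ ∃ c, ∀ j, f j = c) → ¬ ∃ c, ∀ j, comp f j = c := by
    rintro f hf ⟨c, hcf⟩
    apply hf
    refine ⟨f ⟨0, hm⟩, fun j => ?_⟩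
    refine hflip _ c _ ?_ ?_
    · rw [← hcf j]; exact fun h => hcomp f j h.symm
    · rw [← hcf ⟨0, hm⟩]; exact fun h => hcomp f _ h.symm
  set σ : (Fin m → Fin 2) → (Fin m → Fin 2) :=
    fun f => if ∃ c, ∀ j, f j = c then f else comp f with hσdef
  have hσσ : ∀ f, σ (σ f) = f := by
    intro f
    by_cases h : ∃ c, ∀ j, f j = c
    · simp [hσdef, h, -Fin.exists_fin_two]
    · simp [hσdef, h, hnc f h, hcc, -Fin.exists_fin_two]
  have hRe : ∀ f g, R f g = if g = σ f then α (σ f) else 0 := by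
    intro f g
    rw [hR]
    by_cases h : ∃ c, ∀ j, f j = c
    · by_cases hfg : f = g
      · subst hfg; simp [hσdef, h, -Fin.exists_fin_two]
      · simp [hσdef, h, hfg, Ne.symm hfg, -Fin.exists_fin_two]
    · by_cases hfg : g = comp f
      · subst hfg; simp [hσdef, h, -Fin.exists_fin_two]
      · simp [hσdef, h, hfg, -Fin.exists_fin_two]
  have hRe' : ∀ k f, R k f = if k = σ f then α f else 0 := by
    intro k f
    rw [hRe]
    by_cases h : k = σ f
    · subst h; simp [hσσ]
    · rw [if_neg h, if_neg]
      intro h'; exact h (by rw [h', hσσ])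
  have hσinj : ∀ f g, σ f = σ g → f = g := by
    intro f g h
    have := congrArg σ h
    rwa [hσσ, hσσ] at this
  have hone : ∀ x, α x * (starRingEnd ℂ) (α x) = 1 := by
    intro x
    rw [Complex.mul_conj, Complex.normSq_eq_norm_sq, hα]
    norm_num
  have hone' : ∀ x, (starRingEnd ℂ) (α x) * α x = 1 := by
    intro x; rw [mul_comm]; exact hone x
  constructor
  · ext f g
    rw [mul_apply]
    simp only [conjTranspose_apply, hRe]
    rw [Finset.sum_eq_single (σ f)]
    · by_cases hfg : f = g
      · subst hfg
        simp [hone (σ f), one_apply]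
      · rw [if_pos rfl, if_neg (fun h => hfg (hσinj f g h)), star_zero, mul_zero,
          one_apply_ne hfg]
    · intro k _ hk
      rw [if_neg hk, zero_mul]
    · intro h; exact absurd (Finset.mem_univ _) h
  · ext f g
    rw [mul_apply]
    simp only [conjTranspose_apply, hRe']
    rw [Finset.sum_eq_single (σ f)]
    · by_cases hfg : f = g
      · subst hfg
        simp [hone' f, one_apply]
      · rw [if_pos rfl, if_neg (fun h => hfg (hσinj f g (by rw [← h]))), mul_zero,
          one_apply_ne hfg]
    · intro k _ hk
      rw [if_neg hk, star_zero, zero_mul]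
    · intro h; exact absurd (Finset.mem_univ _) h
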